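/- Every polynomial vector field of degree at most k−1 on ℝ^d decomposes as ℙ_{k−1}(ℝ^d; ℝ^d) = grad ℙ_k(ℝ^d) ⊕ ℙ_{k−2}(ℝ^d; 𝕂)·x, where the sum is direct. -/
import Mathlib

open MvPolynomial Finset

namespace Stmt6Aux

variable {d : ℕ}

lemma deg_sum_univ (s : Fin d →₀ ℕ) : ∑ i : Fin d, s i = s.degree := by
  rw [Finsupp.degree]
  exact (Finset.sum_subset (Finset.subset_univ s.support) (fun i _ hi => by
    simpa using Finsupp.notMem_support_iff.mp hi)).symm

lemma X_mul_pderiv_monomial (i : Fin d) (s : Fin d →₀ ℕ) (a : ℝ) :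
    X i * pderiv i (monomial s a) = monomial s (a * (s i : ℝ)) := by
  rw [pderiv_monomial]
  by_cases h : s i = 0
  · simp [h]
  · have hle : Finsupp.single i 1 ≤ s := by
      rw [Finsupp.single_le_iff]; omega
    rw [X, monomial_mul, one_mul, add_tsub_cancel_of_le hle]

lemma euler_monomial (s : Fin d →₀ ℕ) (a : ℝ) :
    ∑ i : Fin d, X i * pderiv i (monomial s a) = monomial s (a * (s.degree : ℝ)) := by
  simp_rw [X_mul_pderiv_monomial]
  rw [← map_sum (monomial s), ← Finset.mul_sum, ← Nat.cast_sum, deg_sum_univ]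

lemma euler_apply (q : MvPolynomial (Fin d) ℝ) :
    ∑ i : Fin d, X i * pderiv i q
      = ∑ s ∈ q.support, monomial s (coeff s q * (s.degree : ℝ)) := by
  conv_lhs => rw [q.as_sum]
  simp_rw [map_sum, Finset.mul_sum]
  rw [Finset.sum_comm]
  exact Finset.sum_congr rfl fun s _ => euler_monomial s _

lemma euler_of_isHomogeneous {q : MvPolynomial (Fin d) ℝ} {n : ℕ}
    (h : q.IsHomogeneous n) :
    ∑ i : Fin d, X i * pderiv i q = (n : ℝ) • q := by
  rw [euler_apply]
  conv_rhs => rw [q.as_sum]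
  rw [Finset.smul_sum]
  refine Finset.sum_congr rfl fun s hs => ?_
  have hdeg : s.degree = n := by
    have := h (mem_support_iff.mp hs)
    rw [Finsupp.degree_eq_weight_one]
    exact this
  rw [hdeg, smul_monomial, smul_eq_mul, mul_comm]

lemma pderiv_totalDegree_le {q : MvPolynomial (Fin d) ℝ} {n : ℕ}
    (h : q.totalDegree ≤ n + 1) (i : Fin d) : (pderiv i q).totalDegree ≤ n := by
  conv_lhs => rw [q.as_sum, map_sum]
  refine (totalDegree_finset_sum _ _).trans (Finset.sup_le fun s hs => ?_)
  rw [pderiv_monomial]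
  by_cases h0 : s i = 0
  · simp [h0]
  · refine (totalDegree_monomial_le _ _).trans ?_
    have hdeg : s.degree ≤ n + 1 := by
      have := le_totalDegree hs
      have h2 : (s.sum fun _ e => e) = s.degree := rfl
      omega
    have hle : Finsupp.single i 1 ≤ s := Finsupp.single_le_iff.mpr (by omega)
    have hsplit : (s - Finsupp.single i 1) + Finsupp.single i 1 = s :=
      tsub_add_cancel_of_le hle
    have key : (s - Finsupp.single i 1).degree + 1 = s.degree := by
      rw [← deg_sum_univ, ← deg_sum_univ, ← hsplit]
      simp [Finsupp.add_apply, Finset.sum_add_distrib, Finsupp.single_apply]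
    have h2 : ((s - Finsupp.single i 1).sum fun _ => (id : ℕ → ℕ))
        = (s - Finsupp.single i 1).degree := rfl
    omega

lemma hc_totalDegree_le (n : ℕ) (φ : MvPolynomial (Fin d) ℝ) :
    (homogeneousComponent n φ).totalDegree ≤ n :=
  (homogeneousComponent_isHomogeneous n φ).totalDegree_le

lemma sum_hc {q : MvPolynomial (Fin d) ℝ} {m : ℕ} (h : q.totalDegree < m) :
    ∑ r ∈ Finset.range m, homogeneousComponent r q = q := by
  conv_rhs => rw [← sum_homogeneousComponent q]
  exact (Finset.sum_subset (Finset.range_subset_range.mpr h)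
    (fun r _ hr => homogeneousComponent_eq_zero r q
      (by simp only [Finset.mem_range, not_lt] at hr; omega))).symm

lemma skew_sum {M : Fin d → Fin d → MvPolynomial (Fin d) ℝ}
    (hM : ∀ i j, M j i = - M i j) :
    ∑ i : Fin d, X i * ∑ j : Fin d, M i j * X j = 0 := by
  simp_rw [Finset.mul_sum]
  have key : ∑ i : Fin d, ∑ j : Fin d, X i * (M i j * X j)
      = - ∑ i : Fin d, ∑ j : Fin d, X i * (M i j * X j) := by
    calc ∑ i : Fin d, ∑ j : Fin d, X i * (M i j * X j)
        = ∑ j : Fin d, ∑ i : Fin d, X i * (M i j * X j) := Finset.sum_comm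
      _ = ∑ j : Fin d, ∑ i : Fin d, -(X j * (M j i * X i)) := by
          refine Finset.sum_congr rfl fun j _ => Finset.sum_congr rfl fun i _ => ?_
          rw [hM j i]; ring
      _ = - ∑ j : Fin d, ∑ i : Fin d, X j * (M j i * X i) := by
          simp [Finset.sum_neg_distrib]
  exact CharZero.eq_neg_self_iff.mp key

lemma euler_eq_zero {q : MvPolynomial (Fin d) ℝ}
    (h : ∑ i : Fin d, X i * pderiv i q = 0) (i : Fin d) : pderiv i q = 0 := by
  rw [euler_apply] at h
  have hcoeff : ∀ s : Fin d →₀ ℕ, s ≠ 0 → coeff s q = 0 := by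
    intro s hs
    by_cases hmem : s ∈ q.support
    · have := congrArg (coeff s) h
      rw [coeff_sum, coeff_zero] at this
      simp_rw [coeff_monomial] at this
      rw [Finset.sum_ite_eq' q.support s (fun s' => coeff s' q * (s'.degree : ℝ)),
        if_pos hmem] at this
      have hdeg : s.degree ≠ 0 := fun hc => hs ((Finsupp.degree_eq_zero_iff s).mp hc)
      have : coeff s q = 0 ∨ (s.degree : ℝ) = 0 := mul_eq_zero.mp this
      rcases this with h' | h'
      · exact h'
      · exact absurd (Nat.cast_eq_zero.mp h') hdeg
    · exact notMem_support_iff.mp hmem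
  have hq : q = C (coeff 0 q) := by
    ext m
    rw [coeff_C]
    by_cases hm : m = 0
    · rw [hm, if_pos rfl]
    · rw [if_neg (Ne.symm hm), hcoeff m hm]
  rw [hq, pderiv_C]

end Stmt6Aux

/-- Direct sum decomposition `ℙ_{k−1}(ℝ^d; ℝ^d) = grad ℙ_k(ℝ^d) ⊕ ℙ_{k−2}(ℝ^d; 𝕂)·x`:
every polynomial vector field of degree at most `k-1` is uniquely the sum of a gradient
of a degree-`≤ k` polynomial and a vector field of the form `x ↦ N(x) x` with `N`
skew-symmetric-matrix-valued of degree at most `k-2`. -/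
theorem stmt_6 (d k : ℕ) (hd : 1 ≤ d) (hk : 1 ≤ k)
    (v : Fin d → MvPolynomial (Fin d) ℝ) (hv : ∀ i, (v i).totalDegree ≤ k - 1) :
    ∃! gw : (Fin d → MvPolynomial (Fin d) ℝ) × (Fin d → MvPolynomial (Fin d) ℝ),
      (∃ p : MvPolynomial (Fin d) ℝ, p.totalDegree ≤ k ∧ gw.1 = fun i => pderiv i p) ∧
      (∃ N : Fin d → Fin d → MvPolynomial (Fin d) ℝ,
        (∀ i j, N i j = 0 ∨ (N i j).totalDegree + 2 ≤ k) ∧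
        (∀ i j, N j i = - N i j) ∧
        gw.2 = fun i => ∑ j : Fin d, N i j * X j) ∧
      v = gw.1 + gw.2 := by
  classical
  set f : MvPolynomial (Fin d) ℝ := ∑ i : Fin d, X i * v i with hfdef
  have hfdeg : f.totalDegree ≤ k := by
    refine (totalDegree_finset_sum _ _).trans (Finset.sup_le fun i _ => ?_)
    refine (totalDegree_mul _ _).trans ?_
    have h1 : (X i : MvPolynomial (Fin d) ℝ).totalDegree = 1 := totalDegree_X i
    have := hv i
    omega
  have hf0 : homogeneousComponent 0 f = 0 := by
    have h1 : constantCoeff f = 0 := by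
      simp only [hfdef, map_sum, map_mul, constantCoeff_X, zero_mul, Finset.sum_const_zero]
    rw [homogeneousComponent_zero, ← congrFun constantCoeff_eq f, h1, map_zero]
  set p : MvPolynomial (Fin d) ℝ :=
    ∑ r ∈ Finset.range (k + 1), ((r : ℝ)⁻¹) • homogeneousComponent r f with hpdef
  have hpdeg : p.totalDegree ≤ k := by
    refine (totalDegree_finset_sum _ _).trans (Finset.sup_le fun r hr => ?_)
    refine (totalDegree_smul_le _ _).trans ((Stmt6Aux.hc_totalDegree_le r f).trans ?_)
    simp only [Finset.mem_range] at hr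
    omega
  have hEp : ∑ i : Fin d, X i * pderiv i p = f := by
    have h1 : ∀ i : Fin d, pderiv i p
        = ∑ r ∈ Finset.range (k + 1), ((r : ℝ)⁻¹) • pderiv i (homogeneousComponent r f) := by
      intro i
      simp only [hpdef, map_sum, Derivation.map_smul]
    simp_rw [h1, Finset.mul_sum, mul_smul_comm]
    rw [Finset.sum_comm]
    have h2 : ∀ r ∈ Finset.range (k + 1),
        ∑ i : Fin d, ((r : ℝ)⁻¹) • (X i * pderiv i (homogeneousComponent r f))
          = homogeneousComponent r f := by
      intro r _
      rw [← Finset.smul_sum,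
        Stmt6Aux.euler_of_isHomogeneous (homogeneousComponent_isHomogeneous r f), smul_smul]
      rcases Nat.eq_zero_or_pos r with h | h
      · subst h; simp [hf0]
      · rw [inv_mul_cancel₀ (Nat.cast_ne_zero.mpr (by omega)), one_smul]
    rw [Finset.sum_congr rfl h2]
    exact Stmt6Aux.sum_hc (by omega)
  have hgdeg : ∀ i : Fin d, (pderiv i p).totalDegree ≤ k - 1 := by
    intro i
    refine Stmt6Aux.pderiv_totalDegree_le ?_ i
    omega
  set w : Fin d → MvPolynomial (Fin d) ℝ := fun i => v i - pderiv i p with hwdef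
  have hwdeg : ∀ i, (w i).totalDegree ≤ k - 1 := by
    intro i
    rw [congrFun hwdef i, sub_eq_add_neg]
    exact (totalDegree_add _ _).trans
      (max_le (hv i) (by rw [totalDegree_neg]; exact hgdeg i))
  have hkw : ∑ i : Fin d, X i * w i = 0 := by
    simp only [hwdef, mul_sub]
    rw [Finset.sum_sub_distrib, hEp, ← hfdef, sub_self]
  have hT : ∀ r < k, ∑ j : Fin d, X j * homogeneousComponent r (w j) = 0 := by
    intro r hr
    have hsum : ∑ r' ∈ Finset.range k,
        ∑ j : Fin d, X j * homogeneousComponent r' (w j) = 0 := by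
      rw [Finset.sum_comm]
      calc ∑ j : Fin d, ∑ r' ∈ Finset.range k, X j * homogeneousComponent r' (w j)
          = ∑ j : Fin d, X j * ∑ r' ∈ Finset.range k, homogeneousComponent r' (w j) :=
            Finset.sum_congr rfl fun j _ => (Finset.mul_sum _ _ _).symm
        _ = ∑ j : Fin d, X j * w j := by
            refine Finset.sum_congr rfl fun j _ => ?_
            rw [Stmt6Aux.sum_hc (by have := hwdeg j; omega)]
        _ = 0 := hkw
    have hmem : ∀ r' : ℕ, (∑ j : Fin d, X j * homogeneousComponent r' (w j))
        ∈ homogeneousSubmodule (Fin d) ℝ (r' + 1) := by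
      intro r'
      refine Submodule.sum_mem _ fun j _ => ?_
      rw [mem_homogeneousSubmodule]
      have := (isHomogeneous_X ℝ j).mul (homogeneousComponent_isHomogeneous r' (w j))
      simpa [add_comm] using this
    have hzero := congrArg (homogeneousComponent (r + 1)) hsum
    rw [map_sum, map_zero] at hzero
    have h2 : ∀ r' ∈ Finset.range k,
        homogeneousComponent (r + 1) (∑ j : Fin d, X j * homogeneousComponent r' (w j))
          = if r' = r then ∑ j : Fin d, X j * homogeneousComponent r' (w j) else 0 := by
      intro r' _
      rw [homogeneousComponent_of_mem (hmem r')]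
      by_cases h : r' = r
      · rw [if_pos (by omega), if_pos h]
      · rw [if_neg (by omega), if_neg h]
    rw [Finset.sum_congr rfl h2, Finset.sum_ite_eq' (Finset.range k) r,
      if_pos (Finset.mem_range.mpr hr)] at hzero
    exact hzero
  have hs : ∀ r < k, ∀ i : Fin d,
      ∑ j : Fin d, X j * pderiv i (homogeneousComponent r (w j))
        = - homogeneousComponent r (w i) := by
    intro r hr i
    have hzero := congrArg (pderiv i) (hT r hr)
    rw [map_sum, map_zero] at hzero
    simp_rw [pderiv_mul] at hzero
    rw [Finset.sum_add_distrib] at hzero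
    have h1 : ∑ j : Fin d, pderiv i (X j) * homogeneousComponent r (w j)
        = homogeneousComponent r (w i) := by
      have h0 : ∀ j : Fin d, pderiv i (X j) * homogeneousComponent r (w j)
          = if j = i then homogeneousComponent r (w j) else 0 := by
        intro j
        by_cases h : j = i
        · subst h; rw [pderiv_X_self, one_mul, if_pos rfl]
        · rw [pderiv_X_of_ne h, zero_mul, if_neg h]
      rw [Finset.sum_congr rfl fun j _ => h0 j, Finset.sum_ite_eq' Finset.univ i,
        if_pos (Finset.mem_univ i)]
    rw [h1] at hzero
    linear_combination hzero
  set N : Fin d → Fin d → MvPolynomial (Fin d) ℝ := fun i j =>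
    ∑ r ∈ Finset.range k, ((r : ℝ) + 1)⁻¹ •
      (pderiv j (homogeneousComponent r (w i)) - pderiv i (homogeneousComponent r (w j)))
    with hNdef
  have hNskew : ∀ i j, N j i = - N i j := by
    intro i j
    simp only [hNdef]
    rw [← Finset.sum_neg_distrib]
    refine Finset.sum_congr rfl fun r _ => ?_
    rw [← smul_neg, neg_sub]
  have hNdeg : ∀ i j, N i j = 0 ∨ (N i j).totalDegree + 2 ≤ k := by
    intro i j
    by_cases hk2 : 2 ≤ k
    · refine Or.inr ?_
      have hdeg2 : (N i j).totalDegree ≤ k - 2 := by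
        simp only [hNdef]
        refine (totalDegree_finset_sum _ _).trans (Finset.sup_le fun r hr => ?_)
        refine (totalDegree_smul_le _ _).trans ?_
        rw [sub_eq_add_neg]
        refine (totalDegree_add _ _).trans (max_le ?_ ?_)
        · refine Stmt6Aux.pderiv_totalDegree_le ((Stmt6Aux.hc_totalDegree_le _ _).trans ?_) _
          simp only [Finset.mem_range] at hr; omega
        · rw [totalDegree_neg]
          refine Stmt6Aux.pderiv_totalDegree_le ((Stmt6Aux.hc_totalDegree_le _ _).trans ?_) _
          simp only [Finset.mem_range] at hr; omega
      omega
    · refine Or.inl ?_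
      have hk1 : k = 1 := by omega
      simp only [hNdef, hk1, Finset.range_one, Finset.sum_singleton,
        homogeneousComponent_zero, pderiv_C, sub_self, smul_zero]
  have hNx : ∀ i : Fin d, ∑ j : Fin d, N i j * X j = w i := by
    intro i
    simp only [hNdef]
    simp_rw [Finset.sum_mul, smul_mul_assoc]
    rw [Finset.sum_comm]
    have h2 : ∀ r ∈ Finset.range k,
        ∑ j : Fin d, ((r : ℝ) + 1)⁻¹ • ((pderiv j (homogeneousComponent r (w i))
          - pderiv i (homogeneousComponent r (w j))) * X j)
        = homogeneousComponent r (w i) := by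
      intro r hr
      rw [← Finset.smul_sum]
      have e1 : ∑ j : Fin d, (pderiv j (homogeneousComponent r (w i))
          - pderiv i (homogeneousComponent r (w j))) * X j
          = ((r : ℝ) + 1) • homogeneousComponent r (w i) := by
        simp_rw [sub_mul]
        rw [Finset.sum_sub_distrib]
        have eA : ∑ j : Fin d, pderiv j (homogeneousComponent r (w i)) * X j
            = (r : ℝ) • homogeneousComponent r (w i) := by
          rw [Finset.sum_congr rfl fun j _ => mul_comm (pderiv j (homogeneousComponent r (w i))) (X j)]
          exact Stmt6Aux.euler_of_isHomogeneous (homogeneousComponent_isHomogeneous r (w i))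
        have eB : ∑ j : Fin d, pderiv i (homogeneousComponent r (w j)) * X j
            = - homogeneousComponent r (w i) := by
          rw [Finset.sum_congr rfl fun j _ => mul_comm (pderiv i (homogeneousComponent r (w j))) (X j)]
          exact hs r (Finset.mem_range.mp hr) i
        rw [eA, eB, sub_neg_eq_add, add_smul, one_smul]
      rw [e1, smul_smul, inv_mul_cancel₀ (by positivity), one_smul]
    rw [Finset.sum_congr rfl h2]
    exact Stmt6Aux.sum_hc (by have := hwdeg i; omega)
  refine ⟨⟨fun i => pderiv i p, w⟩, ⟨⟨p, hpdeg, rfl⟩,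
    ⟨N, hNdeg, hNskew, funext fun i => (hNx i).symm⟩, ?_⟩, ?_⟩
  · funext i
    simp only [Pi.add_apply]
    rw [congrFun hwdef i]
    ring
  · rintro ⟨g', w'⟩ ⟨⟨p', hp'deg, hg'⟩, ⟨N', hN'deg, hN'skew, hw'⟩, hvw'⟩
    simp only at hg' hw' hvw'
    have hkw' : ∑ i : Fin d, X i * w' i = 0 := by
      rw [show w' = fun i => ∑ j : Fin d, N' i j * X j from hw']
      exact Stmt6Aux.skew_sum hN'skew
    have heuler : ∑ i : Fin d, X i * pderiv i (p' - p) = 0 := by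
      have hdiff : ∀ i : Fin d, pderiv i (p' - p) = w i - w' i := by
        intro i
        have hA : v i = pderiv i p' + w' i := by
          have h0 := congrFun hvw' i
          simp only [Pi.add_apply] at h0
          rw [congrFun hg' i] at h0
          exact h0
        have hB : w i = v i - pderiv i p := congrFun hwdef i
        rw [map_sub]
        linear_combination - hB - hA
      simp_rw [hdiff, mul_sub]
      rw [Finset.sum_sub_distrib, hkw, hkw', sub_self]
    have hpd : ∀ i : Fin d, pderiv i (p' - p) = 0 := Stmt6Aux.euler_eq_zero heuler
    have hg'eq : g' = fun i => pderiv i p := by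
      funext i
      have h0 := hpd i
      rw [map_sub, sub_eq_zero] at h0
      rw [congrFun hg' i, h0]
    have hw'eq : w' = w := by
      funext i
      have h0 := congrFun hvw' i
      simp only [Pi.add_apply] at h0
      rw [congrFun hg'eq i] at h0
      have hB : w i = v i - pderiv i p := congrFun hwdef i
      linear_combination - h0 - hB
    exact Prod.ext hg'eq hw'eq
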